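/- Let A_f, A_c be real matrices with m rows, τ > 0, and ρ(τ) = ‖A_fA_fᵀ − τA_cA_cᵀ‖₂. Let P be the orthogonal projection onto the range of A_b^q = (τA_cA_cᵀ)^q A_f, and suppose ‖(A_fA_fᵀ)^q A_f − A_b^q‖₂ ≤ C for some C ≥ 0. Then ‖(I − P)(A_fA_fᵀ)^q A_f‖₂ ≤ C, and consequently ‖(I − P)A_f‖₂ ≤ C^{1/(2q+1)}. -/

import Mathlib

open Matrix
open scoped Matrix.Norms.L2Operator

private lemma dsn {a : ℕ} (x : Fin a → ℝ) : 0 ≤ x ⬝ᵥ x :=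
  Finset.sum_nonneg fun i _ => mul_self_nonneg _

private lemma dot_cs {a : ℕ} (x y : Fin a → ℝ) :
    (x ⬝ᵥ y) ^ 2 ≤ (x ⬝ᵥ x) * (y ⬝ᵥ y) := by
  simpa [dotProduct, sq] using Finset.sum_mul_sq_le_sq_mul_sq Finset.univ x y

private lemma dot_adj {a b : ℕ} (M : Matrix (Fin a) (Fin b) ℝ) (x : Fin b → ℝ) (y : Fin a → ℝ) :
    (M *ᵥ x) ⬝ᵥ y = x ⬝ᵥ (Mᵀ *ᵥ y) := by
  rw [dotProduct_comm, dotProduct_mulVec, ← mulVec_transpose, dotProduct_comm]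

private lemma enorm_sq {k : ℕ} (x : Fin k → ℝ) :
    ‖(WithLp.equiv 2 (Fin k → ℝ)).symm x‖ ^ 2 = x ⬝ᵥ x := by
  have h : ‖(WithLp.equiv 2 (Fin k → ℝ)).symm x‖ = Real.sqrt (x ⬝ᵥ x) := by
    rw [EuclideanSpace.norm_eq]
    congr 1
    simp [dotProduct, sq]
  rw [h, Real.sq_sqrt (dsn x)]

private lemma logconvex_chain (f : ℕ → ℝ) (h0 : ∀ k, 0 ≤ f k)
    (hlc : ∀ k, f (k + 1) ^ 2 ≤ f k * f (k + 2)) :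
    ∀ k, f 1 ^ k * f 0 ≤ f k * f 0 ^ k := by
  have cheb : ∀ k, f k * f 1 ≤ f (k + 1) * f 0 := by
    intro k
    induction k with
    | zero => rw [mul_comm]
    | succ k ih =>
      rcases eq_or_lt_of_le (h0 (k + 1)) with h | h
      · calc f (k + 1) * f 1 = 0 := by rw [← h]; ring
          _ ≤ f (k + 2) * f 0 := mul_nonneg (h0 _) (h0 _)
      · nlinarith [hlc k, h0 k, h0 (k + 2), h0 0, h0 1, mul_le_mul_of_nonneg_left ih (le_of_lt h)]
  intro k
  induction k with
  | zero => simp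
  | succ k ih =>
    calc f 1 ^ (k + 1) * f 0 = f 1 * (f 1 ^ k * f 0) := by ring
      _ ≤ f 1 * (f k * f 0 ^ k) := mul_le_mul_of_nonneg_left ih (h0 1)
      _ = (f k * f 1) * f 0 ^ k := by ring
      _ ≤ (f (k + 1) * f 0) * f 0 ^ k := mul_le_mul_of_nonneg_right (cheb k) (pow_nonneg (h0 0) k)
      _ = f (k + 1) * f 0 ^ (k + 1) := by ring

private lemma norm_proj_le_one {m : ℕ} (Q : Matrix (Fin m) (Fin m) ℝ)
    (hQs : Qᵀ = Q) (hQi : Q * Q = Q) : ‖Q‖ ≤ 1 := by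
  have h : ‖star Q * Q‖ = ‖Q‖ * ‖Q‖ := CStarRing.norm_star_mul_self
  rw [Matrix.star_eq_conjTranspose, Matrix.conjTranspose_eq_transpose_of_trivial,
    hQs, hQi] at h
  nlinarith [norm_nonneg Q]

private lemma proj_power {m n : ℕ} (A : Matrix (Fin m) (Fin n) ℝ)
    (Q : Matrix (Fin m) (Fin m) ℝ) (hQs : Qᵀ = Q) (hQi : Q * Q = Q) (q : ℕ) :
    ‖Q * A‖ ^ (2 * q + 1) ≤ ‖Q * (A * Aᵀ) ^ q * A‖ := by
  set N : Matrix (Fin m) (Fin m) ℝ := A * Aᵀ with hN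
  set K : ℝ := ‖Q * N ^ q * A‖ with hK
  have hK0 : 0 ≤ K := norm_nonneg _
  have hNT : Nᵀ = N := by rw [hN, transpose_mul, transpose_transpose]
  have hNkT : ∀ k, (N ^ k)ᵀ = N ^ k := fun k => by rw [transpose_pow, hNT]
  have h2q1 : ((2 * q + 1 : ℕ) : ℝ) ≠ 0 := by positivity
  set c : ℝ := K ^ (((2 * q + 1 : ℕ) : ℝ))⁻¹ with hc
  have hc0 : 0 ≤ c := Real.rpow_nonneg hK0 _
  have hcK : c ^ (2 * q + 1) = K := by
    rw [hc, ← Real.rpow_natCast (K ^ _) (2 * q + 1), ← Real.rpow_mul hK0,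
      inv_mul_cancel₀ h2q1, Real.rpow_one]
  -- bound `‖Aᵀ * Q‖ ≤ c` via vectors
  have hbound : ‖Aᵀ * Q‖ ≤ c := by
    rw [Matrix.l2_opNorm_def]
    apply ContinuousLinearMap.opNorm_le_bound _ hc0
    intro x
    simp only [LinearEquiv.trans_apply, LinearMap.coe_toContinuousLinearMap',
      Matrix.toEuclideanLin_apply]
    set y : Fin m → ℝ := (WithLp.equiv 2 (Fin m → ℝ)) x with hy
    have hxnorm : ‖x‖ = ‖(WithLp.equiv 2 (Fin m → ℝ)).symm y‖ := by
      rw [hy]; simp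
    rw [hxnorm]
    set w : Fin m → ℝ := Q *ᵥ y with hw
    have hQw : Q *ᵥ w = w := by rw [hw, mulVec_mulVec, hQi]
    set f : ℕ → ℝ := fun k => (N ^ k *ᵥ w) ⬝ᵥ w with hf
    have feven : ∀ a b : ℕ, f (a + b) = (N ^ b *ᵥ w) ⬝ᵥ (N ^ a *ᵥ w) := by
      intro a b
      show (N ^ (a + b) *ᵥ w) ⬝ᵥ w = _
      rw [pow_add, ← mulVec_mulVec, dot_adj, hNkT, dotProduct_comm]
    have fodd : ∀ a b : ℕ, f (a + b + 1) =
        (Aᵀ *ᵥ (N ^ a *ᵥ w)) ⬝ᵥ (Aᵀ *ᵥ (N ^ b *ᵥ w)) := by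
      intro a b
      have h1 : a + b + 1 = a + (b + 1) := by omega
      rw [h1, feven a (b + 1), pow_succ', ← mulVec_mulVec, hN, ← mulVec_mulVec,
        dot_adj, dotProduct_comm, dot_adj]
    have h0 : ∀ k, 0 ≤ f k := by
      intro k
      rcases Nat.even_or_odd k with ⟨a, ha⟩ | ⟨a, ha⟩
      · rw [ha, feven]; exact dsn _
      · rw [ha, show 2 * a + 1 = a + a + 1 from by omega, fodd]; exact dsn _
    have hlc : ∀ k, f (k + 1) ^ 2 ≤ f k * f (k + 2) := by
      intro k
      rcases Nat.even_or_odd k with ⟨a, ha⟩ | ⟨a, ha⟩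
      · rw [ha, show a + a + 1 = a + (a + 1) from rfl, feven a (a + 1),
          show a + a + 2 = (a + 1) + (a + 1) from by omega, feven (a + 1) (a + 1),
          feven a a]
        rw [mul_comm]
        exact dot_cs _ _
      · rw [ha, show 2 * a + 1 + 1 = a + (a + 1) + 1 from by omega, fodd a (a + 1),
          show 2 * a + 1 = a + a + 1 from by omega, fodd a a,
          show a + a + 1 + 2 = (a + 1) + (a + 1) + 1 from by omega, fodd (a + 1) (a + 1)]
        exact dot_cs _ _
    have chain := logconvex_chain f h0 hlc (2 * q + 1)
    -- f (2q+1) ≤ K^2 * f 0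
    have hMw : (Q * N ^ q * A)ᵀ *ᵥ w = Aᵀ *ᵥ (N ^ q *ᵥ w) := by
      rw [transpose_mul, transpose_mul, hNkT, hQs, ← mulVec_mulVec, ← mulVec_mulVec, hQw]
    have hf2q1 : f (2 * q + 1) = ((Q * N ^ q * A)ᵀ *ᵥ w) ⬝ᵥ ((Q * N ^ q * A)ᵀ *ᵥ w) := by
      rw [show 2 * q + 1 = q + q + 1 from by omega, fodd q q, hMw]
    have hKT : ‖(Q * N ^ q * A)ᵀ‖ = K := by
      rw [← Matrix.conjTranspose_eq_transpose_of_trivial, Matrix.l2_opNorm_conjTranspose]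
    have hfK : f (2 * q + 1) ≤ K ^ 2 * f 0 := by
      have h1 := Matrix.l2_opNorm_mulVec (Q * N ^ q * A)ᵀ ((WithLp.equiv 2 (Fin m → ℝ)).symm w)
      have h2 : ‖(WithLp.equiv 2 (Fin n → ℝ)).symm ((Q * N ^ q * A)ᵀ *ᵥ w)‖ ^ 2 =
          f (2 * q + 1) := by
        rw [hf2q1]; exact enorm_sq _
      have h3 : ‖((WithLp.equiv 2 (Fin m → ℝ)).symm w : EuclideanSpace ℝ (Fin m))‖ ^ 2 = f 0 := by
        have h4 : f 0 = w ⬝ᵥ w := by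
          show (N ^ 0 *ᵥ w) ⬝ᵥ w = _; rw [pow_zero, one_mulVec]
        rw [h4]; exact enorm_sq _
      have h1' : ‖(WithLp.equiv 2 (Fin n → ℝ)).symm ((Q * N ^ q * A)ᵀ *ᵥ w)‖ ≤
          K * ‖((WithLp.equiv 2 (Fin m → ℝ)).symm w : EuclideanSpace ℝ (Fin m))‖ := by
        rw [← hKT]
        simpa using h1
      nlinarith [norm_nonneg ((WithLp.equiv 2 (Fin n → ℝ)).symm ((Q * N ^ q * A)ᵀ *ᵥ w)),
        norm_nonneg ((WithLp.equiv 2 (Fin m → ℝ)).symm w : EuclideanSpace ℝ (Fin m)), hK0]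
    -- assemble the scalar chain
    set a : ℝ := ‖(WithLp.equiv 2 (Fin n → ℝ)).symm ((Aᵀ * Q) *ᵥ y)‖ with hadef
    set b : ℝ := ‖((WithLp.equiv 2 (Fin m → ℝ)).symm y : EuclideanSpace ℝ (Fin m))‖ with hbdef
    have ha0 : 0 ≤ a := norm_nonneg _
    have hb0 : 0 ≤ b := norm_nonneg _
    have hasq : a ^ 2 = f 1 := by
      have h1 : (Aᵀ * Q) *ᵥ y = Aᵀ *ᵥ w := by rw [← mulVec_mulVec, hw]
      have h2 : f 1 = (Aᵀ *ᵥ (N ^ 0 *ᵥ w)) ⬝ᵥ (Aᵀ *ᵥ (N ^ 0 *ᵥ w)) := fodd 0 0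
      rw [hadef, h1, enorm_sq, h2, pow_zero, one_mulVec]
    have hbsq : b ^ 2 = y ⬝ᵥ y := enorm_sq _
    have hf00 : 0 ≤ f 0 := h0 0
    have htb : f 0 ≤ b ^ 2 := by
      have h1 : f 0 = w ⬝ᵥ w := by
        show (N ^ 0 *ᵥ w) ⬝ᵥ w = _; rw [pow_zero, one_mulVec]
      have h2 : w ⬝ᵥ w = y ⬝ᵥ w := by
        conv_lhs => rw [hw]
        rw [dot_adj, hQs, hQw]
      have h3 : (y ⬝ᵥ w) ^ 2 ≤ (y ⬝ᵥ y) * (w ⬝ᵥ w) := dot_cs y w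
      rw [h1, hbsq]
      nlinarith [dsn w, dsn y]
    have step1 : f 1 ^ (2 * q + 1) ≤ K ^ 2 * (b ^ 2) ^ (2 * q + 1) := by
      rcases eq_or_lt_of_le hf00 with h | h
      · have hf1 : f 1 = 0 := by nlinarith [hlc 0, h0 2, h0 1]
        rw [hf1, zero_pow (by omega)]
        positivity
      · have h1 : f 1 ^ (2 * q + 1) * f 0 ≤ (K ^ 2 * f 0 ^ (2 * q + 1)) * f 0 := by
          calc f 1 ^ (2 * q + 1) * f 0 ≤ f (2 * q + 1) * f 0 ^ (2 * q + 1) := chain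
            _ ≤ (K ^ 2 * f 0) * f 0 ^ (2 * q + 1) :=
                mul_le_mul_of_nonneg_right hfK (pow_nonneg hf00 _)
            _ = (K ^ 2 * f 0 ^ (2 * q + 1)) * f 0 := by ring
        have h2 : f 1 ^ (2 * q + 1) ≤ K ^ 2 * f 0 ^ (2 * q + 1) :=
          le_of_mul_le_mul_right h1 h
        calc f 1 ^ (2 * q + 1) ≤ K ^ 2 * f 0 ^ (2 * q + 1) := h2
          _ ≤ K ^ 2 * (b ^ 2) ^ (2 * q + 1) :=
              mul_le_mul_of_nonneg_left (pow_le_pow_left₀ hf00 htb _) (by positivity)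
    -- take roots
    have step2 : a ^ (2 * q + 1) ≤ K * b ^ (2 * q + 1) := by
      have hs : (a ^ (2 * q + 1)) ^ 2 ≤ (K * b ^ (2 * q + 1)) ^ 2 := by
        calc (a ^ (2 * q + 1)) ^ 2 = (a ^ 2) ^ (2 * q + 1) := by ring
          _ ≤ K ^ 2 * (b ^ 2) ^ (2 * q + 1) := by rw [hasq]; exact step1
          _ = (K * b ^ (2 * q + 1)) ^ 2 := by ring
      exact (pow_le_pow_iff_left₀ (pow_nonneg ha0 _)
        (mul_nonneg hK0 (pow_nonneg hb0 _)) two_ne_zero).mp hs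
    have step3 : a ≤ c * b := by
      have hs : a ^ (2 * q + 1) ≤ (c * b) ^ (2 * q + 1) := by
        calc a ^ (2 * q + 1) ≤ K * b ^ (2 * q + 1) := step2
          _ = (c * b) ^ (2 * q + 1) := by rw [mul_pow, hcK]
      exact (pow_le_pow_iff_left₀ ha0 (mul_nonneg hc0 hb0) (by omega)).mp hs
    exact step3
  have hQA : ‖Q * A‖ ≤ c := by
    have h1 : ‖Q * A‖ = ‖Aᵀ * Q‖ := by
      rw [← Matrix.l2_opNorm_conjTranspose (Q * A),
        Matrix.conjTranspose_eq_transpose_of_trivial, transpose_mul, hQs]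
    rw [h1]; exact hbound
  calc ‖Q * A‖ ^ (2 * q + 1) ≤ c ^ (2 * q + 1) :=
        pow_le_pow_left₀ (norm_nonneg _) hQA _
    _ = K := hcK

/-- Coarse-grid power iteration error: let `A_b^q = (τA_cA_cᵀ)^q A_f`, let `P` be the
orthogonal projection onto the range of `A_b^q`, and suppose
`‖(A_fA_fᵀ)^q A_f - A_b^q‖ ≤ C`. Then `‖(I - P)(A_fA_fᵀ)^q A_f‖ ≤ C` and
`‖(I - P)A_f‖ ≤ C^{1/(2q+1)}`. -/
theorem stmt18 {m n nc : ℕ}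
    (A_f : Matrix (Fin m) (Fin n) ℝ) (A_c : Matrix (Fin m) (Fin nc) ℝ)
    (τ : ℝ) (hτ : 0 < τ) (q : ℕ)
    (Ab : Matrix (Fin m) (Fin n) ℝ)
    (hAb : Ab = (τ • (A_c * A_cᵀ)) ^ q * A_f)
    (P : Matrix (Fin m) (Fin m) ℝ)
    (hPsymm : Pᵀ = P) (hPidem : P * P = P) (hPAb : P * Ab = Ab)
    (C : ℝ) (hC0 : 0 ≤ C)
    (hC : ‖(A_f * A_fᵀ) ^ q * A_f - Ab‖ ≤ C) :
    ‖(1 - P) * ((A_f * A_fᵀ) ^ q * A_f)‖ ≤ C ∧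
    ‖(1 - P) * A_f‖ ≤ C ^ ((1 : ℝ) / (2 * (q : ℝ) + 1)) := by
  set X : Matrix (Fin m) (Fin n) ℝ := (A_f * A_fᵀ) ^ q * A_f with hX
  have hQs : (1 - P)ᵀ = 1 - P := by rw [transpose_sub, transpose_one, hPsymm]
  have hQi : (1 - P) * (1 - P) = 1 - P := by
    have h : (1 - P) * (1 - P) = 1 - P - P + P * P := by noncomm_ring
    rw [h, hPidem]
    abel
  have hQ1 : ‖(1 - P)‖ ≤ 1 := norm_proj_le_one _ hQs hQi
  have part1 : ‖(1 - P) * X‖ ≤ C := by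
    have h0 : (1 - P) * Ab = 0 := by
      rw [Matrix.sub_mul, Matrix.one_mul, hPAb, sub_self]
    have h1 : (1 - P) * X = (1 - P) * (X - Ab) := by
      rw [Matrix.mul_sub, h0, sub_zero]
    rw [h1]
    calc ‖(1 - P) * (X - Ab)‖ ≤ ‖(1 - P)‖ * ‖X - Ab‖ := Matrix.l2_opNorm_mul _ _
      _ ≤ 1 * C := mul_le_mul hQ1 hC (norm_nonneg _) zero_le_one
      _ = C := one_mul C
  refine ⟨part1, ?_⟩
  have key : ‖(1 - P) * A_f‖ ^ (2 * q + 1) ≤ C := by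
    calc ‖(1 - P) * A_f‖ ^ (2 * q + 1) ≤ ‖(1 - P) * (A_f * A_fᵀ) ^ q * A_f‖ :=
          proj_power A_f (1 - P) hQs hQi q
      _ = ‖(1 - P) * X‖ := by rw [Matrix.mul_assoc, ← hX]
      _ ≤ C := part1
  have hcast : ((2 * q + 1 : ℕ) : ℝ) = 2 * (q : ℝ) + 1 := by push_cast; ring
  have ha0 : (0 : ℝ) ≤ ‖(1 - P) * A_f‖ := norm_nonneg _
  have hexp : ((2 * q + 1 : ℕ) : ℝ) ≠ 0 := by positivity
  have h1 : ‖(1 - P) * A_f‖ =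
      (‖(1 - P) * A_f‖ ^ (2 * q + 1)) ^ ((1 : ℝ) / (2 * (q : ℝ) + 1)) := by
    rw [← Real.rpow_natCast ‖(1 - P) * A_f‖ (2 * q + 1), ← Real.rpow_mul ha0, ← hcast,
      mul_one_div, div_self hexp, Real.rpow_one]
  rw [h1]
  exact Real.rpow_le_rpow (pow_nonneg ha0 _) key (by positivity)
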